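/- There exists a bounded general semilinear language that is not recursively enumerable. Concretely: if L ⊆ a* is not recursively enumerable and b, c are new symbols, then L' = bLc ∪ ca*b is a bounded language (subset of b*a*c*a*b*) whose Parikh image equals that of the regular language ca*b (hence is semilinear), yet L' is not recursively enumerable. -/

import Mathlib

private lemma primrec_replicate {α : Type*} [Primcodable α] (x : α) :
    Primrec (fun m => List.replicate m x) := by
  have : Primrec (Nat.rec ([] : List α) (fun _ l => x :: l)) :=
    Primrec.nat_rec₁ _ ((Primrec.list_cons.comp (Primrec.const x) Primrec.snd).to₂)
  refine this.of_eq fun n => ?_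
  induction n with
  | zero => rfl
  | succ n ih => simp [List.replicate_succ, ← ih]

/-- There is a bounded general semilinear language that is not recursively
enumerable.  Concretely, over the alphabet Fin 3 with a = 0, b = 1, c = 2: if L ⊆ a*
(represented by its set of exponents L : Set ℕ) is not r.e., then
L' = bLc ∪ ca*b is bounded (a subset of b* a* c* a* b*), has the same Parikh image as
the regular language ca*b (hence a semilinear Parikh image), and is not r.e. -/
theorem stmt5 (L : Set ℕ) (hL : ¬ REPred fun m => m ∈ L) :
    let a : Fin 3 := 0
    let b : Fin 3 := 1
    let c : Fin 3 := 2
    let L' : Set (List (Fin 3)) :=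
      {w | ∃ m ∈ L, w = [b] ++ List.replicate m a ++ [c]} ∪
      {w | ∃ m : ℕ, w = [c] ++ List.replicate m a ++ [b]}
    -- L' is bounded: L' ⊆ b* a* c* a* b*
    (∀ w ∈ L', ∃ i₁ i₂ i₃ i₄ i₅ : ℕ,
        w = List.replicate i₁ b ++ List.replicate i₂ a ++ List.replicate i₃ c ++
            List.replicate i₄ a ++ List.replicate i₅ b) ∧
    -- L' has the same Parikh image as the regular language c a* b
    (fun (w : List (Fin 3)) (x : Fin 3) => w.count x) '' L' =
      (fun (w : List (Fin 3)) (x : Fin 3) => w.count x) ''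
        {w | ∃ m : ℕ, w = [c] ++ List.replicate m a ++ [b]} ∧
    -- L' is not recursively enumerable
    ¬ REPred fun w => w ∈ L' := by
  intro a b c L'
  refine ⟨?_, ?_, ?_⟩
  · rintro w (⟨m, _, rfl⟩ | ⟨m, rfl⟩)
    · exact ⟨1, m, 1, 0, 0, by simp⟩
    · exact ⟨0, 0, 1, m, 1, by simp⟩
  · apply Set.Subset.antisymm
    · rintro _ ⟨w, (⟨m, _, rfl⟩ | ⟨m, rfl⟩), rfl⟩
      · refine ⟨[c] ++ List.replicate m a ++ [b], ⟨m, rfl⟩, ?_⟩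
        funext x
        simp only [List.count_append]
        omega
      · exact ⟨_, ⟨m, rfl⟩, rfl⟩
    · rintro _ ⟨w, ⟨m, rfl⟩, rfl⟩
      exact ⟨_, Or.inr ⟨m, rfl⟩, rfl⟩
  · intro hre
    apply hL
    have hf : Computable (fun m : ℕ => [b] ++ List.replicate m a ++ [c]) := by
      have := (primrec_replicate a).to_comp
      exact Computable.list_append.comp
        (Computable.list_append.comp (Computable.const [b]) this)
        (Computable.const [c])
    have : REPred fun m : ℕ => ([b] ++ List.replicate m a ++ [c]) ∈ L' :=
      Partrec.comp hre hf
    refine this.of_eq fun m => ?_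
    constructor
    · rintro (⟨m', hm', heq⟩ | ⟨m', heq⟩)
      · have hlen : m = m' := by
          have := congrArg List.length heq
          simpa using this
        rwa [hlen]
      · have := congrArg (fun l => l.head?) heq
        simp [b, c] at this
    · intro hm
      exact Or.inl ⟨m, hm, rfl⟩
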